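/- Let F be a field, α_{i₁},…,α_{i_k} ∈ F pairwise distinct, 1 ≤ h ≤ k-1, η_t ∈ F for t ∈ L = {0,1,…,l}. Consider the k×k matrix G_I whose rows are (α_{i_j}^s)_{j=1}^k for s ∈ {0,…,k-1}\{h}, together with the row (α_{i_j}^h + ∑_{t∈L} η_t α_{i_j}^{k+t})_{j=1}^k in position h. Then det(G_I) = (1 + ∑_{t∈L} η_t f_{t,h}) · ∏_{1≤m<j≤k}(α_{i_j} - α_{i_m}), where f_{t,h} is the coefficient of x^h in the remainder of x^{k+t} modulo g(x) = ∏_{j=1}^k (x - α_{i_j}). In particular, det(G_I) ≠ 0 if and only if 1 + ∑_{t∈L} η_t f_{t,h} ≠ 0. -/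

import Mathlib

open Polynomial in
theorem stmt_11 {F : Type*} [Field F] (k l h : ℕ) (hk : 2 ≤ k)
    (hh1 : 1 ≤ h) (hh2 : h ≤ k - 1) (α : Fin k → F) (hα : Function.Injective α)
    (η : ℕ → F) (g : Polynomial F) (hg : g = ∏ j, (X - C (α j)))
    (GI : Matrix (Fin k) (Fin k) F)
    (hGI : ∀ s j, GI s j = if (s : ℕ) = h then
        α j ^ h + ∑ t ∈ Finset.range (l + 1), η t * α j ^ (k + t)
      else α j ^ (s : ℕ)) :
    GI.det = (1 + ∑ t ∈ Finset.range (l + 1),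
        η t * (((X : Polynomial F) ^ (k + t) %ₘ g).coeff h)) *
      ∏ m : Fin k, ∏ j ∈ Finset.Ioi m, (α j - α m)
    ∧ (GI.det ≠ 0 ↔
        1 + ∑ t ∈ Finset.range (l + 1),
          η t * (((X : Polynomial F) ^ (k + t) %ₘ g).coeff h) ≠ 0) := by
  have hk0 : 0 < k := by omega
  have hhk : h < k := by omega
  have hmon : g.Monic := by
    rw [hg]; exact monic_prod_of_monic _ _ fun j _ => monic_X_sub_C _
  have hdeg : g.natDegree = k := by
    rw [hg, natDegree_prod_of_monic _ _ fun j _ => monic_X_sub_C _]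
    simp
  have hg1 : g ≠ 1 := by
    intro hgo
    have := hdeg
    rw [hgo, natDegree_one] at this
    omega
  have heval : ∀ j, g.eval (α j) = 0 := by
    intro j
    rw [hg, eval_prod]
    exact Finset.prod_eq_zero (Finset.mem_univ j) (by simp)
  -- key: evaluation of the remainder
  have hrem : ∀ t (j : Fin k),
      ∑ r : Fin k, ((X : Polynomial F) ^ (k + t) %ₘ g).coeff r * α j ^ (r : ℕ)
        = α j ^ (k + t) := by
    intro t j
    have hlt : ((X : Polynomial F) ^ (k + t) %ₘ g).natDegree < k := by
      have := natDegree_modByMonic_lt ((X : Polynomial F) ^ (k + t)) hmon hg1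
      omega
    have := eval_eq_sum_range' hlt (α j)
    rw [← Fin.sum_univ_eq_sum_range] at this
    rw [← this]
    conv_rhs => rw [show α j ^ (k + t) = ((X : Polynomial F) ^ (k + t)).eval (α j) by simp]
    conv_rhs => rw [← modByMonic_add_div ((X : Polynomial F) ^ (k + t)) g]
    rw [eval_add, eval_mul, heval, zero_mul, add_zero]
  -- Vandermonde transpose
  set V : Matrix (Fin k) (Fin k) F := (Matrix.vandermonde α).transpose with hV
  set i0 : Fin k := ⟨h, hhk⟩ with hi0
  set c : Fin k → F := fun r =>
    (if r = i0 then 1 else 0) + ∑ t ∈ Finset.range (l + 1),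
      η t * (((X : Polynomial F) ^ (k + t) %ₘ g).coeff r) with hc
  have hGIV : GI = V.updateRow i0 (∑ r, c r • V r) := by
    ext s j
    by_cases hs : s = i0
    · subst hs
      rw [Matrix.updateRow_self, hGI]
      simp only [hi0, if_pos rfl]
      have : ∀ r : Fin k, (c r • V r) j = c r * α j ^ (r : ℕ) := by
        intro r; simp [hV, Matrix.vandermonde]
      rw [Finset.sum_apply, Finset.sum_congr rfl fun r _ => this r]
      simp only [hc, add_mul, Finset.sum_add_distrib, ite_mul, one_mul, zero_mul,
        if_true]
      rw [Finset.sum_ite_eq' Finset.univ i0 (fun r => α j ^ (r : ℕ))]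
      simp only [Finset.mem_univ, if_pos, hi0]
      congr 1
      simp_rw [Finset.sum_mul]
      rw [Finset.sum_comm]
      refine Finset.sum_congr rfl fun t _ => ?_
      rw [← hrem t j, Finset.mul_sum]
      exact Finset.sum_congr rfl fun r _ => by ring
    · rw [Matrix.updateRow_ne hs, hGI]
      have : (s : ℕ) ≠ h := fun hh => hs (Fin.ext hh)
      rw [if_neg this]
      simp [hV, Matrix.vandermonde]
  have hdetV : V.det = ∏ m : Fin k, ∏ j ∈ Finset.Ioi m, (α j - α m) := by
    rw [hV, Matrix.det_transpose, Matrix.det_vandermonde]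
  have hci0 : c i0 = 1 + ∑ t ∈ Finset.range (l + 1),
      η t * (((X : Polynomial F) ^ (k + t) %ₘ g).coeff h) := by
    simp [hc, hi0]
  have hdet : GI.det = (1 + ∑ t ∈ Finset.range (l + 1),
      η t * (((X : Polynomial F) ^ (k + t) %ₘ g).coeff h)) *
      ∏ m : Fin k, ∏ j ∈ Finset.Ioi m, (α j - α m) := by
    rw [hGIV, Matrix.det_updateRow_sum, hci0, hdetV, smul_eq_mul]
  refine ⟨hdet, ?_⟩
  have hprod : (∏ m : Fin k, ∏ j ∈ Finset.Ioi m, (α j - α m)) ≠ 0 := by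
    refine Finset.prod_ne_zero_iff.2 fun m _ => Finset.prod_ne_zero_iff.2 fun j hj => ?_
    have : m ≠ j := (Finset.mem_Ioi.1 hj).ne'.symm
    exact sub_ne_zero.2 fun hEq => this (hα hEq).symm
  rw [hdet]
  constructor
  · intro hne hzero; exact hne (by rw [hzero, zero_mul])
  · intro hne; exact mul_ne_zero hne hprod
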